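/- arXiv:2004.02586 — 5 statements merged into one kernel-verified Lean document; each statement's English description precedes it below -/
import Mathlib

section
/- Let Ω be a real diagonal n×n matrix with diagonal entries α_1,…,α_n, let B be a real n×m matrix, let 1 ≤ μ ≤ n, and let s_e ∈ ℝ be such that s_e ≠ α_k for all k. Let V_μ ⊆ ℝⁿ be the span of the first μ standard basis vectors, let B_ν be the matrix obtained from B by replacing its first μ rows by zeros, let 𝒱_k ⊆ ℝⁿ be the span of the columns of (s_e·I − Ω)^{-1}B, and let 𝒱_{νk} ⊆ ℝⁿ be the span of the columns of (s_e·I − Ω)^{-1}B_ν. Then V_μ + 𝒱_k = V_μ + 𝒱_{νk} and V_μ ∩ 𝒱_{νk} = {0}; that is, the Krylov Modal Subspace V_μ + 𝒱_k is the (internal) direct sum of V_μ and 𝒱_{νk}. -/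
open Matrix Submodule

/-- Vectors vanishing on coordinates `≥ μ`. -/
def zeroOnHigh (n μ : ℕ) : Submodule ℝ (Fin n → ℝ) where
  carrier := {v | ∀ i : Fin n, μ ≤ (i : ℕ) → v i = 0}
  add_mem' := by intro a b ha hb i hi; simp [ha i hi, hb i hi]
  zero_mem' := by intro i hi; rfl
  smul_mem' := by intro c a ha i hi; simp [ha i hi]

/-- Vectors vanishing on coordinates `< μ`. -/
def zeroOnLow (n μ : ℕ) : Submodule ℝ (Fin n → ℝ) where
  carrier := {v | ∀ i : Fin n, (i : ℕ) < μ → v i = 0}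
  add_mem' := by intro a b ha hb i hi; simp [ha i hi, hb i hi]
  zero_mem' := by intro i hi; rfl
  smul_mem' := by intro c a ha i hi; simp [ha i hi]

lemma span_singles_eq (n μ : ℕ) :
    Submodule.span ℝ {v : Fin n → ℝ | ∃ i : Fin n, (i : ℕ) < μ ∧ v = Pi.single i (1 : ℝ)}
      = zeroOnHigh n μ := by
  apply le_antisymm
  · rw [Submodule.span_le]
    rintro v ⟨i, hi, rfl⟩ j hj
    have : j ≠ i := by
      intro h; subst h; omega
    simp [Pi.single_apply, this]
  · intro v hv
    have hv' : v = ∑ i : Fin n, Pi.single i (v i) := (Finset.univ_sum_single v).symm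
    rw [hv']
    apply Submodule.sum_mem
    intro i _
    by_cases hi : (i : ℕ) < μ
    · have : (Pi.single i (v i) : Fin n → ℝ) = (v i) • (Pi.single i (1 : ℝ) : Fin n → ℝ) := by
        funext j; simp [Pi.single_apply]
      rw [this]
      exact Submodule.smul_mem _ _ (Submodule.subset_span ⟨i, hi, rfl⟩)
    · have : v i = 0 := hv i (le_of_not_gt hi)
      rw [this, Pi.single_zero]
      exact Submodule.zero_mem _

/-- **Fact 1 (KMS direct sum decomposition), in modal coordinates.**
With `Ω = diagonal α`, `V_μ` the span of the first `μ` standard basis vectors,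
`𝒱_k` the span of the columns of `(s_e·I − Ω)⁻¹ B`, and `𝒱_{νk}` the span of the
columns of `(s_e·I − Ω)⁻¹ B_ν` (where `B_ν` is `B` with its first `μ` rows zeroed),
we have `V_μ + 𝒱_k = V_μ + 𝒱_{νk}` and `V_μ ∩ 𝒱_{νk} = {0}`. -/
theorem kms_direct_sum (n m : ℕ) (α : Fin n → ℝ) (B : Matrix (Fin n) (Fin m) ℝ)
    (μ : ℕ) (hμ1 : 1 ≤ μ) (hμn : μ ≤ n)
    (se : ℝ) (hse : ∀ k, se ≠ α k)
    (Bν : Matrix (Fin n) (Fin m) ℝ)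
    (hBν : ∀ i j, Bν i j = if (i : ℕ) < μ then 0 else B i j)
    (Vμ 𝒱k 𝒱νk : Submodule ℝ (Fin n → ℝ))
    (hVμ : Vμ = Submodule.span ℝ
      {v | ∃ i : Fin n, (i : ℕ) < μ ∧ v = Pi.single i (1 : ℝ)})
    (h𝒱k : 𝒱k = Submodule.span ℝ
      (Set.range (((se • (1 : Matrix (Fin n) (Fin n) ℝ) - Matrix.diagonal α)⁻¹ * B)ᵀ)))
    (h𝒱νk : 𝒱νk = Submodule.span ℝ
      (Set.range (((se • (1 : Matrix (Fin n) (Fin n) ℝ) - Matrix.diagonal α)⁻¹ * Bν)ᵀ))) :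
    Vμ ⊔ 𝒱k = Vμ ⊔ 𝒱νk ∧ Vμ ⊓ 𝒱νk = ⊥ := by
  set D : Matrix (Fin n) (Fin n) ℝ :=
    se • (1 : Matrix (Fin n) (Fin n) ℝ) - Matrix.diagonal α with hD
  set g : Fin n → ℝ := fun i => (se - α i)⁻¹ with hg
  have hd0 : ∀ i, se - α i ≠ 0 := fun i => sub_ne_zero.mpr (hse i)
  have hDdiag : D = Matrix.diagonal (fun i => se - α i) := by
    rw [hD, Matrix.smul_one_eq_diagonal, ← Matrix.diagonal_sub]
  have hDinv : D⁻¹ = Matrix.diagonal g := by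
    apply Matrix.inv_eq_right_inv
    have h1 : (fun i => (se - α i) * g i) = fun _ => (1 : ℝ) :=
      funext fun i => mul_inv_cancel₀ (hd0 i)
    rw [hDdiag, Matrix.diagonal_mul_diagonal, h1, Matrix.diagonal_one]
  have hVμ' : Vμ = zeroOnHigh n μ := by rw [hVμ, span_singles_eq]
  -- entry formulas for the columns
  have hcol : ∀ (M : Matrix (Fin n) (Fin m) ℝ) (j : Fin m),
      ((D⁻¹ * M)ᵀ) j = fun i => g i * M i j := by
    intro M j
    funext i
    simp [hDinv, Matrix.transpose_apply, Matrix.diagonal_mul]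
  -- 𝒱νk ≤ zeroOnLow
  have hνlow : 𝒱νk ≤ zeroOnLow n μ := by
    rw [h𝒱νk, Submodule.span_le]
    rintro v ⟨j, rfl⟩ i hi
    rw [hcol]
    simp [hBν i j, hi]
  constructor
  · -- sup equality
    apply le_antisymm
    · apply sup_le le_sup_left
      rw [h𝒱k, Submodule.span_le]
      rintro v ⟨j, rfl⟩
      have hdecomp : ((D⁻¹ * B)ᵀ) j
          = (((D⁻¹ * B)ᵀ) j - ((D⁻¹ * Bν)ᵀ) j) + ((D⁻¹ * Bν)ᵀ) j := by ring
      rw [hdecomp]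
      apply Submodule.add_mem
      · apply Submodule.mem_sup_left
        rw [hVμ']
        intro i hi
        rw [hcol, hcol]
        simp only [Pi.sub_apply]
        rw [hBν i j]
        simp [not_lt.mpr hi]
      · exact Submodule.mem_sup_right
          (h𝒱νk ▸ Submodule.subset_span ⟨j, rfl⟩)
    · apply sup_le le_sup_left
      rw [h𝒱νk, Submodule.span_le]
      rintro v ⟨j, rfl⟩
      have hdecomp : ((D⁻¹ * Bν)ᵀ) j
          = ((D⁻¹ * B)ᵀ) j - (((D⁻¹ * B)ᵀ) j - ((D⁻¹ * Bν)ᵀ) j) := by ring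
      rw [hdecomp]
      apply Submodule.sub_mem
      · exact Submodule.mem_sup_right
          (h𝒱k ▸ Submodule.subset_span ⟨j, rfl⟩)
      · apply Submodule.mem_sup_left
        rw [hVμ']
        intro i hi
        rw [hcol, hcol]
        simp only [Pi.sub_apply]
        rw [hBν i j]
        simp [not_lt.mpr hi]
  · -- trivial intersection
    rw [eq_bot_iff]
    rintro x ⟨hx1, hx2⟩
    rw [hVμ'] at hx1
    have h1 : ∀ i : Fin n, μ ≤ (i : ℕ) → x i = 0 := hx1
    have h2 : ∀ i : Fin n, (i : ℕ) < μ → x i = 0 := hνlow hx2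
    have : x = 0 := by
      funext i
      by_cases hi : (i : ℕ) < μ
      · exact h2 i hi
      · exact h1 i (le_of_not_gt hi)
    simp [this]
end

section
/- Let n ≥ 1, let b_1,…,b_n be real numbers, let ω_1,…,ω_n be positive reals, and let S ⊆ {1,…,n}. Then for every real ω, |Σ_{k∈S} b_k²/(iω + ω_k)| ≤ |Σ_{k=1}^{n} b_k²/(iω + ω_k)|, where i is the imaginary unit. In particular, if the full sum is nonzero, the magnitude of the modal error term e_μ(iω) = (Σ_{k∉S} b_k²/(iω+ω_k))/(Σ_{k=1}^{n} b_k²/(iω+ω_k)) is bounded by 1 for all real ω. -/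
open Complex Finset

lemma kms_partial_le (n : ℕ) (b ω : Fin n → ℝ)
    (hω : ∀ k, 0 < ω k) (S : Finset (Fin n)) (w : ℝ) :
    ‖∑ k ∈ S, ((b k : ℂ)) ^ 2 / (Complex.I * w + (ω k : ℂ))‖ ≤
      ‖∑ k, ((b k : ℂ)) ^ 2 / (Complex.I * w + (ω k : ℂ))‖ := by
  have hd : ∀ k : Fin n, (0:ℝ) < w ^ 2 + ω k ^ 2 := fun k => by
    have := hω k; positivity
  have key : ∀ k : Fin n, ((b k : ℂ)) ^ 2 / (Complex.I * w + (ω k : ℂ)) =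
      Complex.mk ((b k ^ 2 * ω k) / (w ^ 2 + ω k ^ 2))
        (-(w * b k ^ 2) / (w ^ 2 + ω k ^ 2)) := by
    intro k
    have hne : (Complex.I * w + (ω k : ℂ)) ≠ 0 := by
      intro h
      have := congrArg Complex.re h
      simp at this
      exact (hω k).ne' this
    have hdk := (hd k).ne'
    rw [Complex.ext_iff]
    constructor <;>
      simp [Complex.div_re, Complex.div_im, Complex.normSq_apply, ← Complex.ofReal_pow, Complex.mul_re,
        Complex.mul_im] <;> ring_nf
  set g : Fin n → ℝ := fun k => b k ^ 2 / (w ^ 2 + ω k ^ 2) with hg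
  have hgnn : ∀ k, 0 ≤ g k := fun k => by positivity
  have hre : ∀ (T : Finset (Fin n)),
      (∑ k ∈ T, ((b k : ℂ)) ^ 2 / (Complex.I * w + (ω k : ℂ))).re
        = ∑ k ∈ T, ω k * g k := by
    intro T
    rw [Complex.re_sum]
    refine Finset.sum_congr rfl fun k _ => ?_
    rw [key k]; simp [hg]; ring
  have him : ∀ (T : Finset (Fin n)),
      (∑ k ∈ T, ((b k : ℂ)) ^ 2 / (Complex.I * w + (ω k : ℂ))).im
        = -w * ∑ k ∈ T, g k := by
    intro T
    rw [Complex.im_sum, Finset.mul_sum]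
    refine Finset.sum_congr rfl fun k _ => ?_
    rw [key k]; simp [hg]; ring
  rw [Complex.norm_def, Complex.norm_def]
  apply Real.sqrt_le_sqrt
  rw [Complex.normSq_apply, Complex.normSq_apply, hre, hre, him, him]
  have h1 : (0:ℝ) ≤ ∑ k ∈ S, ω k * g k :=
    Finset.sum_nonneg fun k _ => mul_nonneg (hω k).le (hgnn k)
  have h2 : ∑ k ∈ S, ω k * g k ≤ ∑ k, ω k * g k :=
    Finset.sum_le_sum_of_subset_of_nonneg (Finset.subset_univ S)
      (fun k _ _ => mul_nonneg (hω k).le (hgnn k))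
  have h3 : (0:ℝ) ≤ ∑ k ∈ S, g k := Finset.sum_nonneg fun k _ => hgnn k
  have h4 : ∑ k ∈ S, g k ≤ ∑ k, g k :=
    Finset.sum_le_sum_of_subset_of_nonneg (Finset.subset_univ S)
      (fun k _ _ => hgnn k)
  have hr2 : (∑ k ∈ S, ω k * g k) ^ 2 ≤ (∑ k, ω k * g k) ^ 2 := by nlinarith
  have hg2 : (∑ k ∈ S, g k) ^ 2 ≤ (∑ k, g k) ^ 2 := by nlinarith
  nlinarith [mul_le_mul_of_nonneg_left hg2 (sq_nonneg w)]

/-- **Fact 3 (modal error bound), concrete form.** For positive pole magnitudes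
`ω_k` the magnitude of any partial sum `Σ_{k∈S} b_k²/(iω+ω_k)` is bounded by the
magnitude of the full sum; in particular the modal error term
`e_μ(iω) = h_ν(iω)/h(iω)` has magnitude at most 1. -/
theorem kms_modal_error_bound (n : ℕ) (hn : 1 ≤ n) (b ω : Fin n → ℝ)
    (hω : ∀ k, 0 < ω k) (S : Finset (Fin n)) (w : ℝ) :
    ‖∑ k ∈ S, ((b k : ℂ)) ^ 2 / (Complex.I * w + (ω k : ℂ))‖ ≤
      ‖∑ k, ((b k : ℂ)) ^ 2 / (Complex.I * w + (ω k : ℂ))‖ ∧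
    ((∑ k, ((b k : ℂ)) ^ 2 / (Complex.I * w + (ω k : ℂ))) ≠ 0 →
      ‖(∑ k ∈ Sᶜ, ((b k : ℂ)) ^ 2 / (Complex.I * w + (ω k : ℂ))) /
          (∑ k, ((b k : ℂ)) ^ 2 / (Complex.I * w + (ω k : ℂ)))‖ ≤ 1) := by
  refine ⟨kms_partial_le n b ω hω S w, fun hne => ?_⟩
  rw [norm_div, div_le_one (by simpa using (norm_pos_iff.mpr hne))]
  exact kms_partial_le n b ω hω Sᶜ w
end

section
/- (Weyl's inequality.) Let M and N be real symmetric (or complex Hermitian) n×n matrices and let S = M + N. Let α_1 ≥ α_2 ≥ … ≥ α_n, β_1 ≥ β_2 ≥ … ≥ β_n, and γ_1 ≥ γ_2 ≥ … ≥ γ_n denote the eigenvalues of M, N, and S respectively, listed in decreasing order with multiplicity. Then for all indices i ≤ j, γ_j ≤ α_i + β_{j−i+1}. -/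
open Matrix Finset

variable {n : ℕ}

/-- From equal multisets of values, extract a permutation. -/
lemma exists_comp_perm (f g : Fin n → ℝ)
    (h : Finset.univ.val.map f = Finset.univ.val.map g) :
    ∃ σ : Equiv.Perm (Fin n), f = g ∘ σ := by
  rw [Fin.univ_val_map, Fin.univ_val_map] at h
  have hp : (List.ofFn f).Perm (List.ofFn g) := Multiset.coe_eq_coe.mp h
  have hperm : (List.ofFn (f ∘ Tuple.sort f)).Perm (List.ofFn (g ∘ Tuple.sort g)) :=
    (((Tuple.sort f).ofFn_comp_perm f).trans hp).trans
      ((Tuple.sort g).ofFn_comp_perm g).symm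
  have hsorted : List.ofFn (f ∘ Tuple.sort f) = List.ofFn (g ∘ Tuple.sort g) :=
    List.Perm.eq_of_sortedLE
      ((Tuple.monotone_sort f).sortedLE_ofFn) ((Tuple.monotone_sort g).sortedLE_ofFn) hperm
  have heq : f ∘ Tuple.sort f = g ∘ Tuple.sort g := List.ofFn_injective hsorted
  refine ⟨(Tuple.sort f).symm.trans (Tuple.sort g), funext fun x => ?_⟩
  have := congrFun heq ((Tuple.sort f).symm x)
  simpa using this

lemma quad_form_eq (b : OrthonormalBasis (Fin n) ℝ (EuclideanSpace ℝ (Fin n)))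
    (T : EuclideanSpace ℝ (Fin n) →ₗ[ℝ] EuclideanSpace ℝ (Fin n)) (μ : Fin n → ℝ)
    (hT : ∀ k, T (b k) = μ k • b k) (x : EuclideanSpace ℝ (Fin n)) :
    inner ℝ x (T x) = ∑ k, μ k * (b.repr x k)^2 := by
  have hx : T x = ∑ k, (μ k * b.repr x k) • b k := by
    conv_lhs => rw [← b.sum_repr x]
    rw [map_sum]
    refine Finset.sum_congr rfl fun k _ => ?_
    rw [_root_.map_smul, hT k, smul_smul, mul_comm]
  rw [hx, inner_sum]
  refine Finset.sum_congr rfl fun k _ => ?_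
  rw [real_inner_smul_right, real_inner_comm, ← b.repr_apply_apply]
  ring

lemma norm_sq_eq (b : OrthonormalBasis (Fin n) ℝ (EuclideanSpace ℝ (Fin n)))
    (x : EuclideanSpace ℝ (Fin n)) : ‖x‖^2 = ∑ k, (b.repr x k)^2 := by
  have h := quad_form_eq b LinearMap.id (fun _ => 1) (fun k => by simp) x
  simp only [LinearMap.id_apply, one_mul] at h
  rw [← real_inner_self_eq_norm_sq, h]

lemma repr_eq_zero_of_mem_span (b : OrthonormalBasis (Fin n) ℝ (EuclideanSpace ℝ (Fin n)))
    (s : Set (Fin n)) {x : EuclideanSpace ℝ (Fin n)}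
    (hx : x ∈ Submodule.span ℝ (b '' s)) {k : Fin n} (hk : k ∉ s) : b.repr x k = 0 := by
  induction hx using Submodule.span_induction with
  | mem y hy =>
    obtain ⟨m, hm, rfl⟩ := hy
    rw [b.repr_self, EuclideanSpace.single_apply]
    simp only [ite_eq_right_iff]
    intro h; exact absurd (h ▸ hm) hk
  | zero => simp
  | add y z _ _ hy hz => simp [map_add, hy, hz]
  | smul c y _ hy => simp [_root_.map_smul, hy]

lemma finrank_span_image (b : OrthonormalBasis (Fin n) ℝ (EuclideanSpace ℝ (Fin n)))
    (s : Finset (Fin n)) :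
    Module.finrank ℝ (Submodule.span ℝ (b '' ↑s)) = s.card := by
  have hli : LinearIndependent ℝ (fun k : (↑s : Set (Fin n)) => b k) :=
    b.orthonormal.linearIndependent.comp _ Subtype.val_injective
  have : Set.range (fun k : (↑s : Set (Fin n)) => b k) = b '' ↑s := by
    rw [show (fun k : (↑s : Set (Fin n)) => b k) = b ∘ Subtype.val from rfl,
      Set.range_comp, Subtype.range_coe]
  rw [← this, finrank_span_eq_card hli]
  simp

lemma rayleigh_le (b : OrthonormalBasis (Fin n) ℝ (EuclideanSpace ℝ (Fin n)))
    (T : EuclideanSpace ℝ (Fin n) →ₗ[ℝ] EuclideanSpace ℝ (Fin n)) (μ : Fin n → ℝ)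
    (hT : ∀ k, T (b k) = μ k • b k) (s : Set (Fin n)) (c : ℝ) (hc : ∀ m ∈ s, μ m ≤ c)
    {x : EuclideanSpace ℝ (Fin n)} (hx : x ∈ Submodule.span ℝ (b '' s)) :
    inner ℝ x (T x) ≤ c * ‖x‖^2 := by
  rw [quad_form_eq b T μ hT x, norm_sq_eq b x, Finset.mul_sum]
  refine Finset.sum_le_sum fun k _ => ?_
  by_cases h : k ∈ s
  · exact mul_le_mul_of_nonneg_right (hc k h) (sq_nonneg _)
  · rw [repr_eq_zero_of_mem_span b s hx h]; simp

lemma rayleigh_ge (b : OrthonormalBasis (Fin n) ℝ (EuclideanSpace ℝ (Fin n)))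
    (T : EuclideanSpace ℝ (Fin n) →ₗ[ℝ] EuclideanSpace ℝ (Fin n)) (μ : Fin n → ℝ)
    (hT : ∀ k, T (b k) = μ k • b k) (s : Set (Fin n)) (c : ℝ) (hc : ∀ m ∈ s, c ≤ μ m)
    {x : EuclideanSpace ℝ (Fin n)} (hx : x ∈ Submodule.span ℝ (b '' s)) :
    c * ‖x‖^2 ≤ inner ℝ x (T x) := by
  have h := rayleigh_le b (-T) (fun k => -μ k) (fun k => by rw [LinearMap.neg_apply, hT k, neg_smul])
    s (-c) (fun m hm => neg_le_neg (hc m hm)) hx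
  rw [LinearMap.neg_apply, inner_neg_right, neg_mul] at h
  linarith

lemma finrank_inf_ge (U V : Submodule ℝ (EuclideanSpace ℝ (Fin n))) :
    Module.finrank ℝ U + Module.finrank ℝ V ≤ Module.finrank ℝ (U ⊓ V : Submodule ℝ _) + n := by
  have h := Submodule.finrank_sup_add_finrank_inf_eq U V
  have h2 : Module.finrank ℝ (U ⊔ V : Submodule ℝ _) ≤ n := by
    simpa [finrank_euclideanSpace] using Submodule.finrank_le (U ⊔ V)
  omega

/-- **Weyl's inequality.** If `S = M + N` with `M, N` real symmetric, and
`α, β, γ` enumerate the eigenvalues (with multiplicity) of `M, N, S` in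
decreasing order, then `γ_j ≤ α_i + β_{j−i+1}` for all `i ≤ j`
(0-based: `γ j ≤ α i + β (j−i)`). -/
theorem weyl_inequality (n : ℕ) (M N : Matrix (Fin n) (Fin n) ℝ)
    (hM : M.IsHermitian) (hN : N.IsHermitian) (hS : (M + N).IsHermitian)
    (α β γ : Fin n → ℝ)
    (hα : Antitone α) (hβ : Antitone β) (hγ : Antitone γ)
    (hαe : Finset.univ.val.map α = Finset.univ.val.map hM.eigenvalues)
    (hβe : Finset.univ.val.map β = Finset.univ.val.map hN.eigenvalues)
    (hγe : Finset.univ.val.map γ = Finset.univ.val.map hS.eigenvalues)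
    (i j : Fin n) (hij : i ≤ j) :
    γ j ≤ α i + β ⟨(j : ℕ) - (i : ℕ), Nat.lt_of_le_of_lt (Nat.sub_le _ _) j.isLt⟩ := by
  obtain ⟨σM, hσM⟩ := exists_comp_perm α hM.eigenvalues hαe
  obtain ⟨σN, hσN⟩ := exists_comp_perm β hN.eigenvalues hβe
  obtain ⟨σS, hσS⟩ := exists_comp_perm γ hS.eigenvalues hγe
  set d : Fin n := ⟨(j : ℕ) - (i : ℕ), Nat.lt_of_le_of_lt (Nat.sub_le _ _) j.isLt⟩ with hd
  set bM := hM.eigenvectorBasis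
  set bN := hN.eigenvectorBasis
  set bS := hS.eigenvectorBasis
  set TM := Matrix.toEuclideanLin M with hTMdef
  set TN := Matrix.toEuclideanLin N with hTNdef
  set TS := Matrix.toEuclideanLin (M + N) with hTSdef
  have hTM : ∀ k, TM (bM k) = hM.eigenvalues k • bM k := fun k => by
    have h := hM.mulVec_eigenvectorBasis k
    ext l
    simpa [hTMdef, Matrix.toEuclideanLin_apply] using congrFun h l
  have hTN : ∀ k, TN (bN k) = hN.eigenvalues k • bN k := fun k => by
    have h := hN.mulVec_eigenvectorBasis k
    ext l
    simpa [hTNdef, Matrix.toEuclideanLin_apply] using congrFun h l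
  have hTS : ∀ k, TS (bS k) = hS.eigenvalues k • bS k := fun k => by
    have h := hS.mulVec_eigenvectorBasis k
    ext l
    simpa [hTSdef, Matrix.toEuclideanLin_apply, Matrix.add_mulVec] using congrFun h l
  have hTsum : TS = TM + TN := by rw [hTSdef, hTMdef, hTNdef, map_add]
  -- the three subspaces
  set sU : Finset (Fin n) := (Finset.Ici i).image σM with hsU
  set sV : Finset (Fin n) := (Finset.Ici d).image σN with hsV
  set sW : Finset (Fin n) := (Finset.Iic j).image σS with hsW
  set U := Submodule.span ℝ (bM '' ↑sU)
  set V := Submodule.span ℝ (bN '' ↑sV)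
  set W := Submodule.span ℝ (bS '' ↑sW)
  have hU : Module.finrank ℝ U = n - (i : ℕ) := by
    rw [finrank_span_image, hsU, Finset.card_image_of_injective _ σM.injective, Fin.card_Ici]
  have hV : Module.finrank ℝ V = n - ((j : ℕ) - (i : ℕ)) := by
    rw [finrank_span_image, hsV, Finset.card_image_of_injective _ σN.injective, Fin.card_Ici]
  have hW : Module.finrank ℝ W = (j : ℕ) + 1 := by
    rw [finrank_span_image, hsW, Finset.card_image_of_injective _ σS.injective, Fin.card_Iic]
  -- intersection is nontrivial
  have hpos : 0 < Module.finrank ℝ (U ⊓ V ⊓ W : Submodule ℝ _) := by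
    have h1 := finrank_inf_ge U V
    have h2 := finrank_inf_ge (U ⊓ V) W
    have hi : (i : ℕ) < n := i.isLt
    have hj : (j : ℕ) < n := j.isLt
    have hij' : (i : ℕ) ≤ (j : ℕ) := hij
    omega
  obtain ⟨x, hxmem, hx0⟩ : ∃ x, x ∈ (U ⊓ V ⊓ W : Submodule ℝ _) ∧ x ≠ 0 := by
    by_contra h
    push_neg at h
    have hbot : (U ⊓ V ⊓ W : Submodule ℝ _) = ⊥ := by
      rw [Submodule.eq_bot_iff]; exact fun y hy => h y hy
    rw [hbot, finrank_bot] at hpos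
    exact lt_irrefl 0 hpos
  obtain ⟨⟨hxU, hxV⟩, hxW⟩ := hxmem
  have hnorm : (0:ℝ) < ‖x‖^2 := pow_pos (norm_pos_iff.mpr hx0) 2
  -- the three Rayleigh bounds
  have hMle : inner ℝ x (TM x) ≤ α i * ‖x‖^2 := by
    refine rayleigh_le bM TM hM.eigenvalues hTM ↑sU (α i) ?_ hxU
    rintro m hm
    rw [hsU] at hm
    simp only [Finset.coe_image, Set.mem_image, Finset.mem_coe, Finset.mem_Ici] at hm
    obtain ⟨k, hk, rfl⟩ := hm
    have : hM.eigenvalues (σM k) = α k := (congrFun hσM k).symm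
    rw [this]; exact hα hk
  have hNle : inner ℝ x (TN x) ≤ β d * ‖x‖^2 := by
    refine rayleigh_le bN TN hN.eigenvalues hTN ↑sV (β d) ?_ hxV
    rintro m hm
    rw [hsV] at hm
    simp only [Finset.coe_image, Set.mem_image, Finset.mem_coe, Finset.mem_Ici] at hm
    obtain ⟨k, hk, rfl⟩ := hm
    have : hN.eigenvalues (σN k) = β k := (congrFun hσN k).symm
    rw [this]; exact hβ hk
  have hSge : γ j * ‖x‖^2 ≤ inner ℝ x (TS x) := by
    refine rayleigh_ge bS TS hS.eigenvalues hTS ↑sW (γ j) ?_ hxW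
    rintro m hm
    rw [hsW] at hm
    simp only [Finset.coe_image, Set.mem_image, Finset.mem_coe, Finset.mem_Iic] at hm
    obtain ⟨k, hk, rfl⟩ := hm
    have : hS.eigenvalues (σS k) = γ k := (congrFun hσS k).symm
    rw [this]; exact hγ hk
  have hsplit : (inner ℝ x (TS x) : ℝ) = inner ℝ x (TM x) + inner ℝ x (TN x) := by
    rw [hTsum, LinearMap.add_apply, inner_add_right]
  have key : γ j * ‖x‖^2 ≤ (α i + β d) * ‖x‖^2 := by
    rw [add_mul]; linarith
  exact le_of_mul_le_mul_right (by simpa [mul_comm] using key) hnorm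
end

section
/- Let ν ≥ 1, let b_1,…,b_ν be real with b_k ≠ 0 for at least one k, let 0 < ω_1 ≤ … ≤ ω_ν, and let s_e > 0. Define b̃ = Σ_{k=1}^{ν} b_k²/(ω_k+s_e), ẽ = Σ_{k=1}^{ν} b_k²/(ω_k+s_e)², ã = Σ_{k=1}^{ν} b_k² ω_k/(ω_k+s_e)², h_ν(s) = Σ_{k=1}^{ν} b_k²/(s+ω_k), and h_{νk}(s) = b̃²/(s·ẽ + ã). Then as the real frequency ω tends to +∞, the ratio h_{νk}(iω)/h_ν(iω) converges to the real number L = (b̃²/ẽ)/(Σ_{k=1}^{ν} b_k²), which satisfies 0 < L ≤ 1; consequently the Krylov error term e_{νk}(iω) = (h_{νk}(iω) − h_ν(iω))/h_ν(iω) converges to L − 1 and lim_{ω→∞} |e_{νk}(iω)| < 1. -/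
open Complex Finset Filter Topology


lemma inv_Iw_tendsto : Tendsto (fun w : ℝ => (Complex.I * w)⁻¹) atTop (𝓝 0) := by
  rw [tendsto_zero_iff_norm_tendsto_zero]
  have h : Tendsto (fun w : ℝ => |w|⁻¹) atTop (𝓝 0) :=
    tendsto_inv_atTop_zero.comp tendsto_abs_atTop_atTop
  refine h.congr fun w => ?_
  simp

lemma key_tendsto (a : ℂ) (c d : ℝ) (hc : 0 < c) :
    Tendsto (fun w : ℝ => (Complex.I * w * a) / (Complex.I * w * (c : ℂ) + (d : ℂ)))
      atTop (𝓝 (a / (c : ℂ))) := by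
  have hden : Tendsto (fun w : ℝ => (c : ℂ) + (d : ℂ) * (Complex.I * w)⁻¹) atTop (𝓝 (c : ℂ)) := by
    have := (inv_Iw_tendsto.const_mul (d : ℂ)).const_add (c : ℂ)
    simpa using this
  have hc' : (c : ℂ) ≠ 0 := by exact_mod_cast hc.ne'
  have hmain := (tendsto_const_nhds (x := a) (f := atTop)).div hden hc'
  refine hmain.congr' ?_
  filter_upwards [eventually_gt_atTop 0] with w hw
  have hz : (Complex.I * (w : ℂ)) ≠ 0 := by
    intro h
    have := congrArg Complex.im h
    simp at this
    exact hw.ne' this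
  have him : (Complex.I * w * (c : ℂ) + (d : ℂ)).im = w * c := by simp
  have hzc : Complex.I * (w : ℂ) * (c : ℂ) + (d : ℂ) ≠ 0 := by
    intro h
    rw [h] at him
    simp at him
    rcases him with h1 | h2
    · exact hw.ne' h1
    · exact hc.ne' h2
  show a / ((c : ℂ) + (d : ℂ) * (Complex.I * w)⁻¹) = _
  have hrw : (c : ℂ) + (d : ℂ) * (Complex.I * w)⁻¹
      = (Complex.I * w * (c : ℂ) + (d : ℂ)) / (Complex.I * w) := by
    rw [eq_div_iff hz, add_mul, mul_assoc (d : ℂ), inv_mul_cancel₀ hz]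
    ring
  rw [hrw, div_div_eq_mul_div]
  ring_nf

/-- **Step 1 of the KMS error-bound proof.** As the real frequency `ω → ∞`,
the ratio `h_{νk}(iω)/h_ν(iω)` converges to `L = (b̃²/ẽ)/(Σ b_k²)` with
`0 < L ≤ 1`; hence the Krylov error term `e_{νk}(iω)` converges to `L − 1`
and its limiting magnitude is strictly below 1. -/
theorem krylov_error_limit_at_infinity (ν : ℕ) (hν : 1 ≤ ν) (b ω : Fin ν → ℝ)
    (hb : ∃ k, b k ≠ 0) (hωpos : 0 < ω ⟨0, hν⟩) (hωmono : Monotone ω)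
    (se : ℝ) (hse : 0 < se)
    (btil etil atil L : ℝ)
    (hbtil : btil = ∑ k, (b k) ^ 2 / (ω k + se))
    (hetil : etil = ∑ k, (b k) ^ 2 / (ω k + se) ^ 2)
    (hatil : atil = ∑ k, (b k) ^ 2 * ω k / (ω k + se) ^ 2)
    (hL : L = (btil ^ 2 / etil) / ∑ k, (b k) ^ 2)
    (hνfun hνkfun eνk : ℂ → ℂ)
    (hhν : ∀ s : ℂ, hνfun s = ∑ k, ((b k : ℂ)) ^ 2 / (s + (ω k : ℂ)))
    (hhνk : ∀ s : ℂ, hνkfun s = (btil : ℂ) ^ 2 / (s * (etil : ℂ) + (atil : ℂ)))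
    (heνk : ∀ s : ℂ, eνk s = (hνkfun s - hνfun s) / hνfun s) :
    Tendsto (fun w : ℝ => hνkfun (Complex.I * w) / hνfun (Complex.I * w))
        atTop (𝓝 (L : ℂ)) ∧
      (0 < L ∧ L ≤ 1) ∧
      Tendsto (fun w : ℝ => eνk (Complex.I * w)) atTop (𝓝 ((L : ℂ) - 1)) ∧
      Tendsto (fun w : ℝ => ‖eνk (Complex.I * w)‖) atTop
        (𝓝 |L - 1|) ∧
      |L - 1| < 1 := by
  obtain ⟨k0, hk0⟩ := hb
  have hωk : ∀ k, 0 < ω k := fun k =>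
    lt_of_lt_of_le hωpos (hωmono (by simp [Fin.le_def]))
  have hωse : ∀ k, 0 < ω k + se := fun k => by have := hωk k; linarith
  have hB : 0 < ∑ k, (b k) ^ 2 :=
    Finset.sum_pos' (fun k _ => sq_nonneg _) ⟨k0, Finset.mem_univ _, by positivity⟩
  have hbtilpos : 0 < btil := by
    rw [hbtil]
    refine Finset.sum_pos' (fun k _ => by have := hωse k; positivity)
      ⟨k0, Finset.mem_univ _, by have := hωse k0; positivity⟩
  have hetilpos : 0 < etil := by
    rw [hetil]
    refine Finset.sum_pos' (fun k _ => by have := hωse k; positivity)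
      ⟨k0, Finset.mem_univ _, by have := hωse k0; positivity⟩
  have hLpos : 0 < L := by
    rw [hL]; exact div_pos (div_pos (by positivity) hetilpos) hB
  have hCS : btil ^ 2 ≤ (∑ k, (b k) ^ 2) * etil := by
    have h := sum_mul_sq_le_sq_mul_sq Finset.univ b (fun k => b k / (ω k + se))
    have e1 : btil = ∑ k, b k * (b k / (ω k + se)) := by
      rw [hbtil]; exact Finset.sum_congr rfl fun k _ => by ring
    have e2 : etil = ∑ k, (b k / (ω k + se)) ^ 2 := by
      rw [hetil]; exact Finset.sum_congr rfl fun k _ => by rw [div_pow]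
    rw [e1, e2]; exact h
  have hL1 : L ≤ 1 := by
    rw [hL, div_le_one hB, div_le_iff₀ hetilpos]; exact hCS
  -- limits
  have hF : Tendsto (fun w : ℝ => Complex.I * w * hνfun (Complex.I * w)) atTop
      (𝓝 ((∑ k, (b k) ^ 2 : ℝ) : ℂ)) := by
    have hlim : Tendsto (fun w : ℝ =>
        ∑ k, (Complex.I * w * ((b k : ℂ)) ^ 2) / (Complex.I * w * ((1 : ℝ) : ℂ) + ((ω k : ℝ) : ℂ)))
        atTop (𝓝 (∑ k, ((b k : ℂ)) ^ 2 / (((1 : ℝ) : ℂ)))) :=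
      tendsto_finset_sum _ fun k _ => key_tendsto _ 1 (ω k) one_pos
    have hval : (∑ k, ((b k : ℂ)) ^ 2 / (((1 : ℝ) : ℂ))) = ((∑ k, (b k) ^ 2 : ℝ) : ℂ) := by
      push_cast; simp
    rw [← hval]
    refine hlim.congr fun w => ?_
    rw [hhν, Finset.mul_sum]
    refine Finset.sum_congr rfl fun k _ => ?_
    push_cast
    rw [mul_div_assoc, mul_one]
  have hG : Tendsto (fun w : ℝ => Complex.I * w * hνkfun (Complex.I * w)) atTop
      (𝓝 (((btil ^ 2 / etil : ℝ)) : ℂ)) := by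
    have h := key_tendsto ((btil : ℂ) ^ 2) etil atil hetilpos
    have hval : ((btil : ℂ)) ^ 2 / ((etil : ℝ) : ℂ) = (((btil ^ 2 / etil : ℝ)) : ℂ) := by
      push_cast; ring
    rw [← hval]
    refine h.congr fun w => ?_
    rw [hhνk, mul_div_assoc]
  have hBne : ((∑ k, (b k) ^ 2 : ℝ) : ℂ) ≠ 0 := by exact_mod_cast hB.ne'
  have hratio : Tendsto (fun w : ℝ => hνkfun (Complex.I * w) / hνfun (Complex.I * w))
      atTop (𝓝 (L : ℂ)) := by
    have h := hG.div hF hBne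
    have hval : (((btil ^ 2 / etil : ℝ)) : ℂ) / ((∑ k, (b k) ^ 2 : ℝ) : ℂ) = (L : ℂ) := by
      rw [hL]; push_cast; ring
    rw [← hval]
    refine h.congr' ?_
    filter_upwards [eventually_gt_atTop (0 : ℝ)] with w hw
    have hz : (Complex.I * (w : ℂ)) ≠ 0 := by
      intro h'
      have := congrArg Complex.im h'
      simp at this
      exact hw.ne' this
    exact mul_div_mul_left _ _ hz
  have hhνne : ∀ᶠ w : ℝ in atTop, hνfun (Complex.I * w) ≠ 0 := by
    filter_upwards [Filter.Tendsto.eventually_ne (Y := ℂ) hF hBne] with w hw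
    exact fun h => hw (by rw [h, mul_zero])
  have heν : Tendsto (fun w : ℝ => eνk (Complex.I * w)) atTop (𝓝 ((L : ℂ) - 1)) := by
    have h := hratio.sub (tendsto_const_nhds (x := (1:ℂ)))
    refine h.congr' ?_
    filter_upwards [hhνne] with w hw
    rw [heνk, sub_div, div_self hw]
  have habsval : ‖((L : ℂ) - 1)‖ = |L - 1| := by
    rw [show ((L : ℂ) - 1) = (((L - 1 : ℝ)) : ℂ) by push_cast; ring, Complex.norm_real, Real.norm_eq_abs]
  have habs : Tendsto (fun w : ℝ => ‖eνk (Complex.I * w)‖) atTop (𝓝 |L - 1|) := by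
    rw [← habsval]
    exact (continuous_norm.tendsto _).comp heν
  refine ⟨hratio, ⟨hLpos, hL1⟩, heν, habs, ?_⟩
  rw [abs_lt]
  constructor <;> linarith
end

section
/- Let ν ≥ 1, let b_1,…,b_ν be real with b_k ≠ 0 for at least one k, let 0 < ω_1 ≤ … ≤ ω_ν, and let s_e > 0. Define b̃ = Σ_{k=1}^{ν} b_k²/(ω_k+s_e), ẽ = Σ_{k=1}^{ν} b_k²/(ω_k+s_e)², ã = Σ_{k=1}^{ν} b_k² ω_k/(ω_k+s_e)², h_ν(s) = Σ_{k=1}^{ν} b_k²/(s+ω_k), and h_{νk}(s) = b̃²/(s·ẽ + ã). Then the reduced system matches the first two moments of the original at the expansion point: h_{νk}(s_e) = h_ν(s_e) and h_{νk}'(s_e) = h_ν'(s_e). Consequently the error function e_{νk}(s) = (h_{νk}(s) − h_ν(s))/h_ν(s) and its derivative both vanish at s = s_e. -/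
open Complex Finset

/-- **Moment matching (Step 3 of the KMS error-bound proof).** The one-point
Krylov reduced system `h_{νk}(s) = b̃²/(s·ẽ + ã)` matches the first two moments
of `h_ν(s) = Σ b_k²/(s+ω_k)` at the expansion point `s_e`: the values and first
derivatives agree at `s_e`, hence the relative error function and its
derivative vanish there. -/
theorem krylov_moment_matching (ν : ℕ) (hν : 1 ≤ ν) (b ω : Fin ν → ℝ)
    (hb : ∃ k, b k ≠ 0) (hωpos : 0 < ω ⟨0, hν⟩) (hωmono : Monotone ω)
    (se : ℝ) (hse : 0 < se)
    (btil etil atil : ℝ)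
    (hbtil : btil = ∑ k, (b k) ^ 2 / (ω k + se))
    (hetil : etil = ∑ k, (b k) ^ 2 / (ω k + se) ^ 2)
    (hatil : atil = ∑ k, (b k) ^ 2 * ω k / (ω k + se) ^ 2)
    (hνfun hνkfun eνk : ℂ → ℂ)
    (hhν : ∀ s : ℂ, hνfun s = ∑ k, ((b k : ℂ)) ^ 2 / (s + (ω k : ℂ)))
    (hhνk : ∀ s : ℂ, hνkfun s = (btil : ℂ) ^ 2 / (s * (etil : ℂ) + (atil : ℂ)))
    (heνk : ∀ s : ℂ, eνk s = (hνkfun s - hνfun s) / hνfun s) :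
    hνkfun (se : ℂ) = hνfun (se : ℂ) ∧
      deriv hνkfun (se : ℂ) = deriv hνfun (se : ℂ) ∧
      eνk (se : ℂ) = 0 ∧ deriv eνk (se : ℂ) = 0 := by
  have hall : ∀ k : Fin ν, 0 < ω k + se := by
    intro k
    have h0 : ω ⟨0, hν⟩ ≤ ω k := hωmono (by simp [Fin.le_def])
    linarith
  -- positivity of btil
  have hbpos : 0 < btil := by
    rw [hbtil]
    obtain ⟨k, hk⟩ := hb
    refine Finset.sum_pos' (fun i _ => div_nonneg (sq_nonneg _) (hall i).le)
      ⟨k, Finset.mem_univ k, div_pos (by positivity) (hall k)⟩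
  -- the key real identity
  have hiden : se * etil + atil = btil := by
    rw [hetil, hatil, hbtil, Finset.mul_sum, ← Finset.sum_add_distrib]
    refine Finset.sum_congr rfl fun k _ => ?_
    have h := (hall k).ne'
    field_simp
    ring
  have hden : ∀ k : Fin ν, ((se : ℂ) + (ω k : ℂ)) ≠ 0 := by
    intro k
    have : ((se + ω k : ℝ) : ℂ) ≠ 0 :=
      Complex.ofReal_ne_zero.mpr (by linarith [hall k])
    push_cast at this
    exact this
  have hbtilC : (se : ℂ) * (etil : ℂ) + (atil : ℂ) = (btil : ℂ) := by
    rw [← hiden]; push_cast; ring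
  have hbC : (btil : ℂ) ≠ 0 := Complex.ofReal_ne_zero.mpr hbpos.ne'
  have Hν : hνfun = fun s => ∑ k, ((b k : ℂ)) ^ 2 / (s + (ω k : ℂ)) := funext hhν
  have Hνk : hνkfun = fun s => (btil : ℂ) ^ 2 / (s * (etil : ℂ) + (atil : ℂ)) :=
    funext hhνk
  -- derivative of each summand
  have hterm : ∀ k : Fin ν, HasDerivAt (fun s : ℂ => ((b k : ℂ)) ^ 2 / (s + (ω k : ℂ)))
      (-((b k : ℂ)) ^ 2 / ((se : ℂ) + (ω k : ℂ)) ^ 2) (se : ℂ) := by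
    intro k
    have h1 : HasDerivAt (fun s : ℂ => s + (ω k : ℂ)) 1 (se : ℂ) :=
      (hasDerivAt_id _).add_const _
    have h2 := (hasDerivAt_const (se : ℂ) (((b k : ℂ)) ^ 2)).fun_div h1 (hden k)
    convert h2 using 1
    · rfl
    · rfl
    field_simp
    ring
  have hetilC : (etil : ℂ) = ∑ k, ((b k : ℂ)) ^ 2 / ((se : ℂ) + (ω k : ℂ)) ^ 2 := by
    rw [hetil]; push_cast
    exact Finset.sum_congr rfl fun k _ => by ring
  have Dν : HasDerivAt hνfun (-(etil : ℂ)) (se : ℂ) := by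
    rw [Hν]
    have hs : HasDerivAt (fun s : ℂ => ∑ k, ((b k : ℂ)) ^ 2 / (s + (ω k : ℂ)))
        (∑ k, -((b k : ℂ)) ^ 2 / ((se : ℂ) + (ω k : ℂ)) ^ 2) (se : ℂ) :=
      HasDerivAt.fun_sum (fun k _ => hterm k)
    convert hs using 1
    rw [hetilC, ← Finset.sum_neg_distrib]
    exact Finset.sum_congr rfl fun k _ => by rw [neg_div]
  have Dνk : HasDerivAt hνkfun (-(etil : ℂ)) (se : ℂ) := by
    rw [Hνk]
    have hd : HasDerivAt (fun s : ℂ => s * (etil : ℂ) + (atil : ℂ)) (etil : ℂ) (se : ℂ) := by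
      simpa using ((hasDerivAt_id (se : ℂ)).mul_const (etil : ℂ)).add_const (atil : ℂ)
    have hdne : (se : ℂ) * (etil : ℂ) + (atil : ℂ) ≠ 0 := hbtilC ▸ hbC
    have h2 := (hasDerivAt_const (se : ℂ) ((btil : ℂ) ^ 2)).fun_div hd hdne
    convert h2 using 1
    · rfl
    · rfl
    rw [hbtilC]
    field_simp [hbC]
    ring
  -- values at se
  have hνval : hνfun (se : ℂ) = (btil : ℂ) := by
    rw [hhν, hbtil]; push_cast
    exact Finset.sum_congr rfl fun k _ => by ring
  have hνkval : hνkfun (se : ℂ) = (btil : ℂ) := by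
    rw [hhνk, hbtilC]
    field_simp [hbC]
  have h1 : hνkfun (se : ℂ) = hνfun (se : ℂ) := hνkval.trans hνval.symm
  have hνne : hνfun (se : ℂ) ≠ 0 := by rw [hνval]; exact hbC
  have h3 : eνk (se : ℂ) = 0 := by
    rw [heνk, h1, sub_self, zero_div]
  have Dnum : HasDerivAt (fun s => hνkfun s - hνfun s) 0 (se : ℂ) := by
    simpa using Dνk.fun_sub Dν
  have De : HasDerivAt eνk 0 (se : ℂ) := by
    rw [funext heνk]
    have h2 := Dnum.fun_div Dν hνne
    convert h2 using 1
    · rfl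
    · rfl
    rw [h1]
    simp
  exact ⟨h1, Dνk.deriv.trans Dν.deriv.symm, h3, De.deriv⟩
end
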